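/- Single-variable contraction for negative noise: for q ≥ 2 there exists a constant c_q ∈ (0,1) (for q = 4 one may take c_q = 2/5) such that for any mean-zero real random variable Y with finite q-th moment and any a ∈ ℝ, ‖a − c_q Y‖_q ≤ ‖a + Y‖_q. -/

import Mathlib

open MeasureTheory

lemma tangent_rpow {p A B : ℝ} (hp : 1 ≤ p) (hB : 0 < B) (hA : 0 ≤ A) :
    B ^ p + p * B ^ (p - 1) * (A - B) ≤ A ^ p := by
  have hAB : (A - B) / B = A / B - 1 := by field_simp
  have hs : -1 ≤ (A - B) / B := by
    rw [hAB]
    have : 0 ≤ A / B := div_nonneg hA hB.le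
    linarith
  have h := one_add_mul_self_le_rpow_one_add hs hp
  have h1 : (1 : ℝ) + (A - B) / B = A / B := by field_simp; ring
  rw [h1, Real.div_rpow hA hB.le] at h
  have hBp : (0:ℝ) < B ^ p := Real.rpow_pos_of_pos hB p
  have h2 := mul_le_mul_of_nonneg_left h hBp.le
  have h3 : B ^ p * (A ^ p / B ^ p) = A ^ p := by field_simp
  rw [h3] at h2
  have h4 : B ^ (p - 1) = B ^ p / B := by
    rw [Real.rpow_sub hB, Real.rpow_one]
  calc B ^ p + p * B ^ (p - 1) * (A - B)
      = B ^ p * (1 + p * ((A - B) / B)) := by rw [h4]; field_simp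
    _ ≤ A ^ p := h2

lemma sq_rpow_half (x q : ℝ) : (x ^ 2) ^ (q / 2) = |x| ^ q := by
  have h1 : x ^ 2 = |x| ^ ((2:ℕ) : ℝ) := by
    rw [Real.rpow_natCast, sq_abs]
  rw [h1, ← Real.rpow_mul (abs_nonneg x)]
  congr 1; ring

lemma upper_bern {r u : ℝ} (hr : 0 ≤ r) (hu : 0 ≤ u) (hu1 : u ≤ 1) (hru : r * u < 1) :
    (1 + u) ^ r * (1 - r * u) ≤ 1 := by
  rcases le_total r 1 with hr1 | hr1
  · have h1 : (1 + u) ^ r ≤ 1 + r * u := by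
      have := rpow_one_add_le_one_add_mul_self (by linarith : (-1:ℝ) ≤ u) hr hr1
      linarith
    calc (1 + u) ^ r * (1 - r * u) ≤ (1 + r * u) * (1 - r * u) := by
          apply mul_le_mul_of_nonneg_right h1 (by linarith)
      _ = 1 - (r * u) ^ 2 := by ring
      _ ≤ 1 := by nlinarith [sq_nonneg (r * u)]
  · have hr0 : 0 < r := by linarith
    have h0 : (0:ℝ) ≤ 1 - r * u := by linarith
    have h1 : (1 - r * u) ^ (1 / r) ≤ 1 - u := by
      have := rpow_one_add_le_one_add_mul_self (s := -(r * u)) (p := 1/r) (by linarith)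
        (by positivity) (by rw [div_le_one hr0]; exact hr1)
      calc (1 - r * u) ^ (1/r) = (1 + -(r*u)) ^ (1/r) := by ring_nf
        _ ≤ 1 + (1/r) * -(r * u) := this
        _ = 1 - u := by field_simp; ring
    have h2 : (1 + u) * (1 - r * u) ^ (1/r) ≤ 1 := by
      calc (1 + u) * (1 - r * u) ^ (1/r) ≤ (1 + u) * (1 - u) := by
            apply mul_le_mul_of_nonneg_left h1 (by linarith)
        _ = 1 - u ^ 2 := by ring
        _ ≤ 1 := by nlinarith [sq_nonneg u]
    have h3 : ((1 + u) * (1 - r * u) ^ (1/r)) ^ r ≤ 1 ^ r := by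
      apply Real.rpow_le_rpow ?_ h2 hr
      positivity
    rw [Real.one_rpow, Real.mul_rpow (by linarith) (by positivity),
      ← Real.rpow_mul h0] at h3
    have he : 1 / r * r = 1 := by field_simp
    rw [he, Real.rpow_one] at h3
    exact h3

set_option maxHeartbeats 2000000 in
lemma keyGen (q c y : ℝ) (hq : 2 ≤ q) (hc : c = 1 / (3 * q)) :
    |1 - c * y| ^ q + q * (1 + c) * y ≤ |1 + y| ^ q := by
  have hq0 : (0:ℝ) < q := by linarith
  have hc3 : c * (3 * q) = 1 := by rw [hc]; field_simp
  have hc0 : 0 < c := by rw [hc]; positivity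
  have hc6 : c ≤ 1/6 := by nlinarith
  have hqc : q * c = 1/3 := by nlinarith
  rcases le_or_gt y 1 with hy1 | hy1
  · -- CASE I : y ≤ 1
    have hby : 0 < 1 - c * y := by nlinarith [mul_le_mul_of_nonneg_left hy1 hc0.le]
    rw [abs_of_pos hby]
    have htan := tangent_rpow (p := q/2) (A := (1+y)^2) (B := (1-c*y)^2)
      (by linarith) (by positivity) (by positivity)
    rw [sq_rpow_half, sq_rpow_half,
      show q/2 - 1 = (q-2)/2 by ring, sq_rpow_half, abs_of_pos hby] at htan
    -- htan : |1-c*y|^q + q/2 * (1-c*y)^(q-2) * ((1+y)^2 - (1-c*y)^2) ≤ |1+y|^q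
    have hS : 2*y ≤ (1-c*y)^(q-2) * (y*(2+(1-c)*y)) := by
      rcases le_total 0 y with hy0 | hy0
      · -- 0 ≤ y ≤ 1
        set m := max (q-2) 1 with hm
        have hm1 : (1:ℝ) ≤ m := le_max_right _ _
        have hqm : q - 2 ≤ m := le_max_left _ _
        have hcy0 : 0 ≤ c*y := mul_nonneg hc0.le hy0
        have hcy1 : c*y ≤ c := by nlinarith
        have e1 : (1-c*y)^m ≤ (1-c*y)^(q-2) :=
          Real.rpow_le_rpow_of_exponent_ge hby (by linarith) hqm
        have e2 : 1 - m*(c*y) ≤ (1-c*y)^m := by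
          have h := one_add_mul_self_le_rpow_one_add (s := -(c*y)) (by linarith) hm1
          calc 1 - m*(c*y) = 1 + m * (-(c*y)) := by ring
            _ ≤ (1 + -(c*y))^m := h
            _ = (1-c*y)^m := by ring_nf
        have hmc : 3*(m*c) + c ≤ 1 := by
          rcases le_total (q-2) 1 with h | h
          · rw [hm, max_eq_right h]; nlinarith
          · rw [hm, max_eq_left h]; nlinarith
        have h20 : (0:ℝ) ≤ 2+(1-c)*y := by nlinarith
        have e3 : 2 ≤ (1 - m*(c*y))*(2+(1-c)*y) := by
          have hA : 0 ≤ y*(1 - c - 3*(m*c)) := mul_nonneg hy0 (by linarith)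
          have hB : 0 ≤ m*c*(y - y^2) := by
            apply mul_nonneg (mul_nonneg (by linarith) hc0.le)
            nlinarith
          have hC : 0 ≤ m*c^2*y^2 := by positivity
          nlinarith [hA, hB, hC]
        have e4 : 2 ≤ (1-c*y)^(q-2) * (2+(1-c)*y) := by
          calc (2:ℝ) ≤ (1 - m*(c*y))*(2+(1-c)*y) := e3
            _ ≤ (1-c*y)^m * (2+(1-c)*y) := mul_le_mul_of_nonneg_right e2 h20
            _ ≤ (1-c*y)^(q-2) * (2+(1-c)*y) := mul_le_mul_of_nonneg_right e1 h20
        calc 2*y = y*2 := by ring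
          _ ≤ y * ((1-c*y)^(q-2) * (2+(1-c)*y)) := mul_le_mul_of_nonneg_left e4 hy0
          _ = (1-c*y)^(q-2) * (y*(2+(1-c)*y)) := by ring
      · -- y ≤ 0
        have e4 : (1-c*y)^(q-2) * (2+(1-c)*y) ≤ 2 := by
          rcases le_total (2+(1-c)*y) 0 with h20 | h20
          · have h1 := mul_nonneg (Real.rpow_nonneg hby.le (q-2)) (neg_nonneg.mpr h20)
            nlinarith [h1]
          · have hcy : 0 ≤ -(c*y) := by nlinarith [mul_nonneg hc0.le (neg_nonneg.mpr hy0)]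
            set u := -(c*y) with hu
            have hu1 : u*(1-c) ≤ 2*c := by
              have h := mul_le_mul_of_nonneg_left
                (show -((1-c)*y) ≤ 2 from by linarith) hc0.le
              calc u*(1-c) = c * -((1-c)*y) := by rw [hu]; ring
                _ ≤ c*2 := h
                _ = 2*c := by ring
            have hule : u ≤ 1 := by
              nlinarith [hu1, mul_nonneg hcy (show (0:ℝ) ≤ 1/6 - c by linarith), hc6]
            have hr0 : (0:ℝ) ≤ q - 2 := by linarith
            have hruno : 0 ≤ (q-2)*u := mul_nonneg hr0 hcy
            have hru : (q-2)*u < 1 := by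
              have ha := mul_le_mul_of_nonneg_left hu1 hr0
              have hb := mul_nonneg hruno (show (0:ℝ) ≤ 1/6 - c by linarith)
              nlinarith [ha, hb, hqc, hc0.le]
            have hup := upper_bern hr0 hcy hule hru
            have hpos : (0:ℝ) < 1 - (q-2)*u := by linarith
            have hkey : 2+(1-c)*y ≤ 2*(1 - (q-2)*u) := by
              have hbr : 0 ≤ (1-c) - 2*(q-2)*c := by nlinarith
              nlinarith [mul_nonneg (neg_nonneg.mpr hy0) hbr]
            have h1cu : 1 - c*y = 1 + u := by rw [hu]; ring
            calc (1-c*y)^(q-2) * (2+(1-c)*y) = (1+u)^(q-2) * (2+(1-c)*y) := by rw [h1cu]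
              _ ≤ (1+u)^(q-2) * (2*(1 - (q-2)*u)) := by
                  apply mul_le_mul_of_nonneg_left hkey (Real.rpow_nonneg (by linarith) _)
              _ = 2 * ((1+u)^(q-2) * (1 - (q-2)*u)) := by ring
              _ ≤ 2 * 1 := by linarith [hup]
              _ = 2 := by ring
        have := mul_le_mul_of_nonpos_left e4 hy0
        calc 2*y = y*2 := by ring
          _ ≤ y * ((1-c*y)^(q-2) * (2+(1-c)*y)) := this
          _ = (1-c*y)^(q-2) * (y*(2+(1-c)*y)) := by ring
    -- combine
    have hmul := mul_le_mul_of_nonneg_left hS (show (0:ℝ) ≤ q/2*(1+c) by positivity)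
    have hfin : q*(1+c)*y ≤ q/2 * (1-c*y)^(q-2) * ((1+y)^2 - (1-c*y)^2) := by
      calc q*(1+c)*y = q/2*(1+c) * (2*y) := by ring
        _ ≤ q/2*(1+c) * ((1-c*y)^(q-2) * (y*(2+(1-c)*y))) := hmul
        _ = q/2 * (1-c*y)^(q-2) * ((1+y)^2 - (1-c*y)^2) := by ring
    linarith [htan, hfin]
  · rcases le_or_gt (c*y) 2 with h2 | h2
    · -- CASE II : 1 < y, c*y ≤ 2
      have habs : |1-c*y| ≤ 1 := by
        rw [abs_le]
        constructor
        · linarith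
        · nlinarith [mul_pos hc0 (by linarith : (0:ℝ) < y)]
      have h2q : |1-c*y|^q ≤ 1 := Real.rpow_le_one (abs_nonneg _) habs hq0.le
      have hb : 1 + q/2*(2*y + y^2) ≤ |1+y|^q := by
        have h := one_add_mul_self_le_rpow_one_add (s := 2*y + y^2)
          (by nlinarith [sq_nonneg (1+y)]) (p := q/2) (by linarith)
        calc 1 + q/2*(2*y + y^2) ≤ (1 + (2*y + y^2))^(q/2) := h
          _ = ((1+y)^2)^(q/2) := by ring_nf
          _ = |1+y|^q := sq_rpow_half _ _
      have hmid : q*(1+c)*y ≤ q/2*(2*y + y^2) := by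
        nlinarith [mul_pos hq0 (by linarith : (0:ℝ) < y), mul_pos hq0 (mul_pos (by linarith : (0:ℝ) < y) (by linarith : (0:ℝ) < y))]
      linarith
    · -- CASE III : c*y > 2
      have hy12 : 6*q < y := by nlinarith
      have hy1' : (1:ℝ) ≤ y := by nlinarith
      have hy0 : (0:ℝ) < y := by linarith
      have habs : |1-c*y| = c*y - 1 := by
        rw [abs_of_neg (by linarith : 1-c*y < 0)]; ring
      have t1 : |1-c*y|^q ≤ (c*y)^q := by
        rw [habs]
        exact Real.rpow_le_rpow (by linarith) (by linarith) hq0.le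
      have t1' : (c*y)^q = c^q * y^q := Real.mul_rpow hc0.le hy0.le
      have h5 : c^q ≤ 1/2 := by
        have e1 : c^q ≤ c^(2:ℝ) :=
          Real.rpow_le_rpow_of_exponent_ge hc0 (by linarith) hq
        rw [show (2:ℝ) = ((2:ℕ):ℝ) by norm_num, Real.rpow_natCast, pow_two] at e1
        nlinarith [e1, mul_le_mul hc6 hc6 hc0.le (by norm_num : (0:ℝ) ≤ 1/6)]
      have t2 : c^q * y^q ≤ 1/2 * y^q :=
        mul_le_mul_of_nonneg_right h5 (Real.rpow_nonneg hy0.le q)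
      have htan := tangent_rpow (p := q/2) (A := (1+y)^2) (B := y^2)
        (by linarith) (by positivity) (by positivity)
      rw [sq_rpow_half, sq_rpow_half,
        show q/2 - 1 = (q-2)/2 by ring, sq_rpow_half, abs_of_pos hy0,
        abs_of_pos (by linarith : (0:ℝ) < 1 + y)] at htan
      -- htan : y^q + q/2 * y^(q-2) * ((1+y)^2 - y^2) ≤ (1+y)^q ... careful: |y|^q with abs rewritten
      have h6 : y^(q-2) * y = y^(q-1) := by
        rw [show q-1 = (q-2)+1 by ring, Real.rpow_add_one hy0.ne']
      have h7 : y ≤ y^(q-1) := by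
        calc y = y^(1:ℝ) := (Real.rpow_one y).symm
          _ ≤ y^(q-1) := Real.rpow_le_rpow_of_exponent_le hy1' (by linarith)
      have h8 : y*y ≤ y^q := by
        have e1 : y^(2:ℝ) ≤ y^q := Real.rpow_le_rpow_of_exponent_le hy1' hq
        rw [show (2:ℝ) = ((2:ℕ):ℝ) by norm_num, Real.rpow_natCast, pow_two] at e1
        linarith
      have h9 : 0 ≤ y^(q-2) := Real.rpow_nonneg hy0.le _
      have t3 : y^q + q*y^(q-1) + q/2*y^(q-2) ≤ |1+y|^q := by
        rw [abs_of_pos (by linarith : (0:ℝ) < 1 + y)]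
        have e1 : q/2 * y^(q-2) * ((1+y)^2 - y^2) = q*(y^(q-2)*y) + q/2*y^(q-2) := by ring
        rw [e1, h6] at htan
        linarith
      have t4 : q*y ≤ q*y^(q-1) := mul_le_mul_of_nonneg_left h7 hq0.le
      have t5 : q*c*y = 1/3*y := by rw [hqc]
      have t6 : 1/3*y ≤ 1/2*y^q := by nlinarith [h8, hy12, hy1']
      have hfin : q*(1+c)*y = q*y + q*c*y := by ring
      nlinarith [t1, t2, t3, t4, t5, t6, mul_nonneg hq0.le h9, htan, t1']


lemma key4 (y : ℝ) : |1 - 2/5 * y| ^ (4:ℝ) + 4 * (1 + 2/5) * y ≤ |1 + y| ^ (4:ℝ) := by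
  have h1 : ∀ t : ℝ, |t| ^ (4:ℝ) = t ^ (4:ℕ) := by
    intro t
    rw [show ((4:ℝ)) = ((4:ℕ):ℝ) by norm_num, Real.rpow_natCast, ← abs_pow]
    exact abs_of_nonneg (by positivity)
  rw [h1, h1]
  nlinarith [sq_nonneg (y * (609 * y + 1330)), sq_nonneg y, sq_nonneg (y*y)]


lemma keyc (q : ℝ) (hq : 2 ≤ q) :
    ∃ c : ℝ, 0 < c ∧ c < 1 ∧ (q = 4 → c = 2/5) ∧
      ∀ y : ℝ, |1 - c * y| ^ q + q * (1 + c) * y ≤ |1 + y| ^ q := by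
  by_cases h4 : q = 4
  · subst h4
    exact ⟨2/5, by norm_num, by norm_num, fun _ => rfl, key4⟩
  · refine ⟨1/(3*q), by positivity, ?_, fun h => absurd h h4, fun y => keyGen q _ y hq rfl⟩
    rw [div_lt_one (by linarith)]
    linarith

lemma scaledPos (q c : ℝ) (hq : 2 ≤ q)
    (hkey : ∀ y : ℝ, |1 - c * y| ^ q + q * (1 + c) * y ≤ |1 + y| ^ q)
    (a : ℝ) (ha : 0 < a) :
    ∀ y : ℝ, |a - c * y| ^ q + (q * (1 + c) * a ^ (q-1)) * y ≤ |a + y| ^ q := by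
  intro y
  have h := hkey (y / a)
  have haq : (0:ℝ) < a ^ q := Real.rpow_pos_of_pos ha q
  have h2 := mul_le_mul_of_nonneg_left h haq.le
  have e0 : a * (1 - c * (y/a)) = a - c * y := by field_simp
  have e0' : a * (1 + y/a) = a + y := by field_simp
  have eA : a ^ q * |1 - c * (y/a)| ^ q = |a - c * y| ^ q := by
    rw [← Real.mul_rpow ha.le (abs_nonneg _)]
    congr 1
    rw [← e0, abs_mul, abs_of_pos ha]
  have eB : a ^ q * |1 + y/a| ^ q = |a + y| ^ q := by
    rw [← Real.mul_rpow ha.le (abs_nonneg _)]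
    congr 1
    rw [← e0', abs_mul, abs_of_pos ha]
  have eC : a ^ q * (q * (1 + c) * (y/a)) = q * (1 + c) * a ^ (q-1) * y := by
    rw [Real.rpow_sub_one ha.ne']
    field_simp
    try ring
  calc |a - c*y| ^ q + (q * (1 + c) * a ^ (q-1)) * y
      = a ^ q * |1 - c * (y/a)| ^ q + a ^ q * (q * (1+c) * (y/a)) := by
        rw [eA, eC]
    _ ≤ a ^ q * |1 + y/a| ^ q := by linarith [h2, mul_add (a^q) (|1 - c * (y/a)| ^ q) (q * (1+c) * (y/a))]
    _ = |a + y| ^ q := eB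

lemma scaled (q c : ℝ) (hq : 2 ≤ q) (hc0 : 0 < c) (hc1 : c < 1)
    (hkey : ∀ y : ℝ, |1 - c * y| ^ q + q * (1 + c) * y ≤ |1 + y| ^ q)
    (a : ℝ) : ∃ K : ℝ, ∀ y : ℝ, |a - c * y| ^ q + K * y ≤ |a + y| ^ q := by
  rcases lt_trichotomy a 0 with ha | ha | ha
  · refine ⟨-(q * (1 + c) * (-a) ^ (q-1)), fun y => ?_⟩
    have h := scaledPos q c hq hkey (-a) (by linarith) (-y)
    have e1 : |-a - c * -y| = |a - c * y| := by
      rw [show -a - c * -y = -(a - c*y) by ring, abs_neg]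
    have e2 : |-a + -y| = |a + y| := by
      rw [show -a + -y = -(a + y) by ring, abs_neg]
    rw [e1, e2] at h
    linarith
  · subst ha
    refine ⟨0, fun y => ?_⟩
    have e1 : |(0:ℝ) - c * y| = c * |y| := by
      rw [zero_sub, abs_neg, abs_mul, abs_of_pos hc0]
    rw [e1, zero_add, zero_mul, add_zero,
      Real.mul_rpow hc0.le (abs_nonneg y)]
    have : c ^ q ≤ 1 := Real.rpow_le_one hc0.le hc1.le (by linarith)
    nlinarith [Real.rpow_nonneg (abs_nonneg y) q, this,
      mul_le_mul_of_nonneg_right this (Real.rpow_nonneg (abs_nonneg y) q)]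
  · exact ⟨q * (1 + c) * a ^ (q-1), scaledPos q c hq hkey a ha⟩

lemma integ {Ω : Type} [MeasurableSpace Ω] (μ : Measure Ω) [IsProbabilityMeasure μ]
    (q : ℝ) (hq : 2 ≤ q) (Y : Ω → ℝ) (hY : Integrable Y μ)
    (hYq : Integrable (fun ω => |Y ω| ^ q) μ) (a b : ℝ) (hb : |b| ≤ 1) :
    Integrable (fun ω => |a + b * Y ω| ^ q) μ := by
  have hq0 : (0:ℝ) ≤ q := by linarith
  have hmeas : AEStronglyMeasurable (fun ω => |a + b * Y ω| ^ q) μ := by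
    have hcont : Continuous fun x : ℝ => |a + b * x| ^ q := by
      apply Continuous.rpow_const
      · exact (continuous_const.add (continuous_const.mul continuous_id)).abs
      · exact fun x => Or.inr hq0
    exact hcont.comp_aestronglyMeasurable hY.aestronglyMeasurable
  apply Integrable.mono' (g := fun ω => 2 ^ q * (|a| ^ q + |Y ω| ^ q))
    (((integrable_const (|a| ^ q)).add hYq).const_mul _) hmeas
  filter_upwards with ω
  rw [Real.norm_eq_abs, abs_of_nonneg (Real.rpow_nonneg (abs_nonneg _) q)]
  have h1 : |a + b * Y ω| ≤ 2 * max |a| |Y ω| := by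
    calc |a + b * Y ω| ≤ |a| + |b| * |Y ω| := by
          rw [← abs_mul]; exact abs_add_le _ _
      _ ≤ |a| + |Y ω| := by
          nlinarith [abs_nonneg (Y ω), mul_le_mul_of_nonneg_right hb (abs_nonneg (Y ω))]
      _ ≤ 2 * max |a| |Y ω| := by
          have := le_max_left |a| |Y ω|
          have := le_max_right |a| |Y ω|
          linarith
  calc |a + b * Y ω| ^ q ≤ (2 * max |a| |Y ω|) ^ q :=
        Real.rpow_le_rpow (abs_nonneg _) h1 hq0
    _ = 2 ^ q * (max |a| |Y ω|) ^ q := Real.mul_rpow (by norm_num) (le_max_of_le_left (abs_nonneg a))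
    _ ≤ 2 ^ q * (|a| ^ q + |Y ω| ^ q) := by
        apply mul_le_mul_of_nonneg_left ?_ (Real.rpow_nonneg (by norm_num) q)
        rcases max_cases |a| |Y ω| with ⟨h, _⟩ | ⟨h, _⟩ <;> rw [h]
        · nlinarith [Real.rpow_nonneg (abs_nonneg (Y ω)) q]
        · nlinarith [Real.rpow_nonneg (abs_nonneg a) q]

/-- single-variable contraction for negative noise. For `q ≥ 2`
there is a constant `c_q ∈ (0,1)` (for `q = 4` one may take `c_q = 2/5`) such
that for every mean-zero real random variable `Y` with finite `q`-th moment and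
every `a ∈ ℝ`, `‖a − c_q Y‖_q ≤ ‖a + Y‖_q`. -/
theorem negative_noise_contraction (q : ℝ) (hq : 2 ≤ q) :
    ∃ c : ℝ, 0 < c ∧ c < 1 ∧ (q = 4 → c = 2 / 5) ∧
      ∀ (Ω : Type) [MeasurableSpace Ω] (μ : Measure Ω), IsProbabilityMeasure μ →
        ∀ Y : Ω → ℝ, Integrable Y μ → (∫ ω, Y ω ∂μ) = 0 →
          Integrable (fun ω => |Y ω| ^ q) μ →
          ∀ a : ℝ,
            (∫ ω, |a - c * Y ω| ^ q ∂μ) ^ (1 / q)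
              ≤ (∫ ω, |a + Y ω| ^ q ∂μ) ^ (1 / q) := by
  obtain ⟨c, hc0, hc1, hc4, hkey⟩ := keyc q hq
  refine ⟨c, hc0, hc1, hc4, ?_⟩
  intro Ω _ μ hμ Y hY hmean hYq a
  have I1 : Integrable (fun ω => |a + Y ω| ^ q) μ := by
    have := integ μ q hq Y hY hYq a 1 (by norm_num)
    simpa using this
  have I2 : Integrable (fun ω => |a - c * Y ω| ^ q) μ := by
    have := integ μ q hq Y hY hYq a (-c) (by rw [abs_of_neg (by linarith)]; linarith)
    have e : ∀ ω, a + (-c) * Y ω = a - c * Y ω := fun ω => by ring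
    simpa only [e] using this
  obtain ⟨K, hK⟩ := scaled q c hq hc0 hc1 hkey a
  have hint : (∫ ω, |a - c * Y ω| ^ q ∂μ) ≤ ∫ ω, |a + Y ω| ^ q ∂μ := by
    have step : (∫ ω, |a - c * Y ω| ^ q ∂μ) ≤ ∫ ω, (|a + Y ω| ^ q - K * Y ω) ∂μ := by
      apply integral_mono I2 (I1.sub (hY.const_mul K))
      intro ω
      have := hK (Y ω)
      simp only [Pi.sub_apply]
      linarith
    have e2 : (∫ ω, (|a + Y ω| ^ q - K * Y ω) ∂μ)
        = (∫ ω, |a + Y ω| ^ q ∂μ) - K * ∫ ω, Y ω ∂μ := by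
      rw [integral_sub I1 (hY.const_mul K), integral_const_mul]
    rw [e2, hmean, mul_zero, sub_zero] at step
    exact step
  exact Real.rpow_le_rpow
    (integral_nonneg fun ω => Real.rpow_nonneg (abs_nonneg _) q) hint
    (by positivity)
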